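/- arXiv:2503.24022 — 2 statements merged into one kernel-verified Lean document; each statement's English description precedes it below -/
import Mathlib

section
/- (Lemma 1) Let A ∈ ℝ^{n×n} be symmetric, b ∈ ℝⁿ, f(x) = ½ xᵀ A x + bᵀ x, let φ_t be the flow map of the gradient flow ẋ(t) = A x(t) + b, and let M = 2A e^{2A} − e^{2A} + I. Then for every x₀ ∈ ℝⁿ, ∫₀¹ (f(φ₁(x₀)) − f(φ_t(x₀))) dt = ¼ (x₀ + A⁺ b)ᵀ M (x₀ + A⁺ b) + ½ bᵀ P_A b. -/
open Matrix MeasureTheory ProbabilityTheory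
open scoped Classical

noncomputable section

/-- Moore–Penrose pseudoinverse `A⁺` of a real square matrix: the unique `B` with
`A B A = A`, `B A B = B`, and `A B`, `B A` symmetric. -/
def pinv {n : ℕ} (A : Matrix (Fin n) (Fin n) ℝ) : Matrix (Fin n) (Fin n) ℝ :=
  if h : ∃ B : Matrix (Fin n) (Fin n) ℝ,
      A * B * A = A ∧ B * A * B = B ∧ (A * B)ᵀ = A * B ∧ (B * A)ᵀ = B * A
  then h.choose else 0

/-- `P_A = I - A A⁺`, the orthogonal projection onto the null space of `A`. -/
def nullProj {n : ℕ} (A : Matrix (Fin n) (Fin n) ℝ) : Matrix (Fin n) (Fin n) ℝ :=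
  1 - A * pinv A

/-- The matrix exponential `e^A`. -/
def mexp {n : ℕ} (A : Matrix (Fin n) (Fin n) ℝ) : Matrix (Fin n) (Fin n) ℝ :=
  NormedSpace.exp A

/-- The (symmetric) positive semidefinite square root of a positive semidefinite matrix
(junk value `0` if no such root exists). -/
def msqrt {n : ℕ} (S : Matrix (Fin n) (Fin n) ℝ) : Matrix (Fin n) (Fin n) ℝ :=
  if h : ∃ B : Matrix (Fin n) (Fin n) ℝ, B.PosSemidef ∧ B * B = S then h.choose else 0

/-- The matrix logarithm of a symmetric positive definite matrix: the unique symmetric `A`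
with `e^A = S` (junk value `0` if no such `A` exists). -/
def matLog {n : ℕ} (S : Matrix (Fin n) (Fin n) ℝ) : Matrix (Fin n) (Fin n) ℝ :=
  if h : ∃ A : Matrix (Fin n) (Fin n) ℝ, A.IsSymm ∧ mexp A = S then h.choose else 0

/-- The quadratic potential `f(x) = ½ xᵀ A x + bᵀ x`. -/
def quadf {n : ℕ} (A : Matrix (Fin n) (Fin n) ℝ) (b x : Fin n → ℝ) : ℝ :=
  (1 / 2) * (x ⬝ᵥ (A *ᵥ x)) + b ⬝ᵥ x

/-- Squared Euclidean norm `‖v‖²` on `ℝⁿ`. -/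
def sqNorm {n : ℕ} (v : Fin n → ℝ) : ℝ := ∑ i, (v i) ^ 2

/-- Squared Frobenius norm `‖M‖_F²`. -/
def frobSq {n : ℕ} (M : Matrix (Fin n) (Fin n) ℝ) : ℝ := ∑ i, ∑ j, (M i j) ^ 2

/-- The flow map `φ : (t, x₀) ↦ x(t)` of the ODE `ẋ = A x + b`, `x(0) = x₀`. -/
def flowMap {n : ℕ} (A : Matrix (Fin n) (Fin n) ℝ) (b : Fin n → ℝ) :
    ℝ → (Fin n → ℝ) → (Fin n → ℝ) :=
  if h : ∃ φ : ℝ → (Fin n → ℝ) → (Fin n → ℝ),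
      (∀ x₀, φ 0 x₀ = x₀) ∧ ∀ x₀ t, HasDerivAt (fun s => φ s x₀) (A *ᵥ (φ t x₀) + b) t
  then h.choose else fun _ x => x

/-- The standard Gaussian measure on `ℝⁿ`. -/
def stdGaussianPi (n : ℕ) : Measure (Fin n → ℝ) :=
  Measure.pi fun _ => gaussianReal 0 1

/-- The multivariate Gaussian measure `N(μ, Σ)` on `ℝⁿ` (for `Σ` positive semidefinite),
realized as the pushforward of the standard Gaussian by `x ↦ μ + √Σ x`. -/
def multiGaussian {n : ℕ} (μ : Fin n → ℝ) (S : Matrix (Fin n) (Fin n) ℝ) :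
    Measure (Fin n → ℝ) :=
  (stdGaussianPi n).map (fun x => μ + (msqrt S) *ᵥ x)

/-- The Wasserstein KL-divergence `D_WKL(μ‖ν)`: for the quadratic potential
`f(x) = ½ xᵀ A x + bᵀ x` (`A` symmetric) whose gradient flow `φ` pushes `μ` forward to `ν`
at time 1, it is `∫ ∫₀¹ (f(φ₁ x) - f(φ_t x)) dt dμ(x)` (junk value `0` if no such `f`). -/
def DWKL {n : ℕ} (μ ν : Measure (Fin n → ℝ)) : ℝ :=
  if h : ∃ p : Matrix (Fin n) (Fin n) ℝ × (Fin n → ℝ),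
      p.1.IsSymm ∧ μ.map (flowMap p.1 p.2 1) = ν then
    ∫ x, (∫ t in (0:ℝ)..1,
        (quadf h.choose.1 h.choose.2 (flowMap h.choose.1 h.choose.2 1 x)
          - quadf h.choose.1 h.choose.2 (flowMap h.choose.1 h.choose.2 t x))) ∂μ
  else 0

/-- The flow map of the one-dimensional ODE `ẋ = a x + b`. -/
def flow1 (a b : ℝ) : ℝ → ℝ → ℝ :=
  if h : ∃ φ : ℝ → ℝ → ℝ,
      (∀ x₀, φ 0 x₀ = x₀) ∧ ∀ x₀ t, HasDerivAt (fun s => φ s x₀) (a * φ t x₀ + b) t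
  then h.choose else fun _ x => x

/-- The quadratic potential `f(x) = ½ a x² + b x` on `ℝ`. -/
def quad1 (a b x : ℝ) : ℝ := (1 / 2) * a * x ^ 2 + b * x

/-- The Wasserstein KL-divergence for measures on `ℝ`. -/
def DWKL1 (μ ν : Measure ℝ) : ℝ :=
  if h : ∃ p : ℝ × ℝ, μ.map (flow1 p.1 p.2 1) = ν then
    ∫ x, (∫ t in (0:ℝ)..1,
        (quad1 h.choose.1 h.choose.2 (flow1 h.choose.1 h.choose.2 1 x)
          - quad1 h.choose.1 h.choose.2 (flow1 h.choose.1 h.choose.2 t x))) ∂μ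
  else 0

end


section Aux
open NormedSpace Set
theorem pinv_uniq {n : ℕ} (A B C : Matrix (Fin n) (Fin n) ℝ)
    (hB1 : A * B * A = A) (hB2 : B * A * B = B) (hB3 : (A * B)ᵀ = A * B) (hB4 : (B * A)ᵀ = B * A)
    (hC1 : A * C * A = A) (hC2 : C * A * C = C) (hC3 : (A * C)ᵀ = A * C) (hC4 : (C * A)ᵀ = C * A) :
    B = C := by
  have hAB : A * B = A * C := by
    calc A * B = (A * B)ᵀ := hB3.symm
    _ = (A * C * A * B)ᵀ := by rw [hC1]
    _ = (A*B)ᵀ * (A*C)ᵀ := by simp [transpose_mul, mul_assoc]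
    _ = (A*B)*(A*C) := by rw [hB3, hC3]
    _ = (A*B*A)*C := by simp [mul_assoc]
    _ = A * C := by rw [hB1]
  have hBA : B * A = C * A := by
    calc B * A = (B*A)ᵀ := hB4.symm
    _ = (B * (A * C * A))ᵀ := by rw [hC1]
    _ = (C*A)ᵀ * (B*A)ᵀ := by simp [transpose_mul, mul_assoc]
    _ = (C*A)*(B*A) := by rw [hB4, hC4]
    _ = C*(A*B*A) := by simp [mul_assoc]
    _ = C * A := by rw [hB1]
  calc B = B * A * B := hB2.symm
  _ = B * (A * C) := by rw [← hAB, mul_assoc]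
  _ = (C * A) * C := by rw [← mul_assoc, hBA]
  _ = C := by rw [hC2]

theorem pinv_exists {n : ℕ} (A : Matrix (Fin n) (Fin n) ℝ) (hA : A.IsSymm) :
    ∃ B : Matrix (Fin n) (Fin n) ℝ,
      A * B * A = A ∧ B * A * B = B ∧ (A * B)ᵀ = A * B ∧ (B * A)ᵀ = B * A := by
  have hH : A.IsHermitian := by
    rwa [Matrix.IsHermitian, conjTranspose_eq_transpose_of_trivial]
  set U : Matrix (Fin n) (Fin n) ℝ := (hH.eigenvectorUnitary : Matrix (Fin n) (Fin n) ℝ) with hU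
  have hUU : star U * U = 1 := Unitary.coe_star_mul_self _
  set d : Fin n → ℝ := hH.eigenvalues with hd
  have hspec : A = U * diagonal d * star U := by
    have hst := hH.spectral_theorem
    rw [Unitary.conjStarAlgAut_apply] at hst
    exact hst
  have key : ∀ D1 D2 : Matrix (Fin n) (Fin n) ℝ,
      (U * D1 * star U) * (U * D2 * star U) = U * (D1 * D2) * star U := by
    intro D1 D2
    calc (U * D1 * star U) * (U * D2 * star U) = U * D1 * (star U * U) * D2 * star U := by
          simp [mul_assoc]
    _ = U * (D1 * D2) * star U := by rw [hUU]; simp [mul_assoc]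
  have htr : ∀ e : Fin n → ℝ, (U * diagonal e * star U)ᵀ = U * diagonal e * star U := by
    intro e
    have hstar : star U = Uᵀ := by
      rw [Matrix.star_eq_conjTranspose, conjTranspose_eq_transpose_of_trivial]
    rw [hstar]
    simp [transpose_mul, diagonal_transpose, mul_assoc]
  have hdd : ∀ e f : Fin n → ℝ, diagonal e * diagonal f = diagonal (fun i => e i * f i) :=
    fun e f => diagonal_mul_diagonal e f
  refine ⟨U * diagonal (fun i => (d i)⁻¹) * star U, ?_, ?_, ?_, ?_⟩
  · conv_lhs => rw [hspec]
    rw [key, key, hdd, hdd]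
    rw [hspec]
    congr 2
    congr 1
    funext i
    rcases eq_or_ne (d i) 0 with h | h <;> field_simp [h]
  · conv_lhs => rw [hspec]
    rw [key, key, hdd, hdd]
    congr 2
    congr 1
    funext i
    rcases eq_or_ne (d i) 0 with h | h <;> field_simp [h]
  · conv_lhs => rw [hspec, key, hdd]; rw [htr]
    rw [hspec, key, hdd]
  · conv_lhs => rw [hspec, key, hdd]; rw [htr]
    rw [hspec, key, hdd]


section
variable {n : ℕ}
attribute [local instance] Matrix.linftyOpNormedRing Matrix.linftyOpNormedAlgebra

theorem mexp_hasDerivAt (A : Matrix (Fin n) (Fin n) ℝ) (t : ℝ) :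
    HasDerivAt (fun u : ℝ => exp (u • A)) (A * exp (t • A)) t :=
  hasDerivAt_exp_smul_const' A t

/-- CLM sending a matrix `M` to `M *ᵥ w`. -/
noncomputable def mulVecCLM (w : Fin n → ℝ) :
    Matrix (Fin n) (Fin n) ℝ →L[ℝ] (Fin n → ℝ) :=
  LinearMap.toContinuousLinearMap
    { toFun := fun M => M *ᵥ w
      map_add' := fun M N => Matrix.add_mulVec M N w
      map_smul' := fun r M => Matrix.smul_mulVec r M w }

theorem hasDerivAt_mexp_mulVec (A : Matrix (Fin n) (Fin n) ℝ) (w : Fin n → ℝ) (t : ℝ) :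
    HasDerivAt (fun u : ℝ => exp (u • A) *ᵥ w) ((A * exp (t • A)) *ᵥ w) t := by
  have h := ((mulVecCLM w).hasFDerivAt (x := exp (t • A))).comp_hasDerivAt t
    (mexp_hasDerivAt A t)
  exact h

/-- CLM sending a matrix `M` to `v ⬝ᵥ (M *ᵥ w)`. -/
noncomputable def dotMulVecCLM (v w : Fin n → ℝ) :
    Matrix (Fin n) (Fin n) ℝ →L[ℝ] ℝ :=
  LinearMap.toContinuousLinearMap
    { toFun := fun M => v ⬝ᵥ (M *ᵥ w)
      map_add' := fun M N => by simp [Matrix.add_mulVec, dotProduct_add]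
      map_smul' := fun r M => by simp [Matrix.smul_mulVec] }

theorem hasDerivAt_dot_mexp (A : Matrix (Fin n) (Fin n) ℝ) (v w : Fin n → ℝ) (t : ℝ) :
    HasDerivAt (fun u : ℝ => v ⬝ᵥ (exp (u • A) *ᵥ w))
      (v ⬝ᵥ ((A * exp (t • A)) *ᵥ w)) t := by
  have h := ((dotMulVecCLM v w).hasFDerivAt (x := exp (t • A))).comp_hasDerivAt t
    (mexp_hasDerivAt A t)
  exact h

theorem continuous_mexp (A : Matrix (Fin n) (Fin n) ℝ) :
    Continuous (fun u : ℝ => exp (u • A)) := by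
  have : Differentiable ℝ (fun u : ℝ => exp (u • A)) :=
    fun t => (mexp_hasDerivAt A t).differentiableAt
  exact this.continuous

theorem lipschitz_affine (A : Matrix (Fin n) (Fin n) ℝ) (b : Fin n → ℝ) :
    ∃ K : NNReal, LipschitzWith K (fun x : Fin n → ℝ => A *ᵥ x + b) := by
  set T := LinearMap.toContinuousLinearMap (Matrix.mulVecLin A)
  refine ⟨‖T‖₊, LipschitzWith.of_dist_le_mul fun x y => ?_⟩
  have h1 : dist (A *ᵥ x + b) (A *ᵥ y + b) = dist (T x) (T y) := by
    simp [dist_add_right, T]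
  rw [h1]
  exact T.lipschitz.dist_le_mul x y

end

section FlowAux
variable {n : ℕ}
attribute [local instance] Matrix.linftyOpNormedRing Matrix.linftyOpNormedAlgebra

theorem mexp_hasDerivAt' (A : Matrix (Fin n) (Fin n) ℝ) (t : ℝ) :
    HasDerivAt (fun u : ℝ => NormedSpace.exp (u • A)) (NormedSpace.exp (t • A) * A) t :=
  hasDerivAt_exp_smul_const A t

theorem mexp_mul_eq_self (A P : Matrix (Fin n) (Fin n) ℝ) (hAP : A * P = 0) (t : ℝ) :
    NormedSpace.exp (t • A) * P = P := by
  have h : ∀ s : ℝ, HasDerivAt (fun u : ℝ => NormedSpace.exp (u • A) * P) 0 s := by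
    intro s
    have := (mexp_hasDerivAt' A s).mul_const P
    simp [mul_assoc, hAP] at this
    exact this
  have hconst : (fun u : ℝ => NormedSpace.exp (u • A) * P) t
      = (fun u : ℝ => NormedSpace.exp (u • A) * P) 0 :=
    is_const_of_deriv_eq_zero (fun s => (h s).differentiableAt) (fun s => (h s).deriv) t 0
  simpa [NormedSpace.exp_zero] using hconst

theorem mexp_comm (A : Matrix (Fin n) (Fin n) ℝ) (t : ℝ) :
    NormedSpace.exp (t • A) * A = A * NormedSpace.exp (t • A) :=
  (((Commute.refl A).smul_left t).exp_left).eq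

theorem mexp_mul_mexp (A : Matrix (Fin n) (Fin n) ℝ) (t : ℝ) :
    NormedSpace.exp (t • A) * NormedSpace.exp (t • A)
      = NormedSpace.exp ((2 * t) • A) := by
  rw [show NormedSpace.exp (t • A) * NormedSpace.exp (t • A) = NormedSpace.exp (t • A + t • A) from
    (NormedSpace.exp_add_of_commute ((Commute.refl A).smul_left t |>.smul_right t)).symm]
  congr 1
  rw [← add_smul]
  ring_nf

theorem mexp_transpose_symm {A : Matrix (Fin n) (Fin n) ℝ} (hA : A.IsSymm) (t : ℝ) :
    (NormedSpace.exp (t • A))ᵀ = NormedSpace.exp (t • A) := by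
  rw [← Matrix.exp_transpose, Matrix.transpose_smul, hA]

theorem continuous_dot_mexp (A : Matrix (Fin n) (Fin n) ℝ) (v w : Fin n → ℝ) :
    Continuous (fun t : ℝ => v ⬝ᵥ ((A * NormedSpace.exp ((2*t) • A)) *ᵥ w)) := by
  have hc1 : Continuous (fun t : ℝ => NormedSpace.exp ((2*t) • A)) :=
    (continuous_mexp A).comp (continuous_const.mul continuous_id)
  exact (dotMulVecCLM v w).continuous.comp (continuous_const.mul hc1)

end FlowAux

theorem dotProduct_mulVec_left {n : ℕ} (M : Matrix (Fin n) (Fin n) ℝ) (v w : Fin n → ℝ) :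
    (M *ᵥ v) ⬝ᵥ w = v ⬝ᵥ (Mᵀ *ᵥ w) := by
  rw [Matrix.dotProduct_mulVec, Matrix.vecMul_transpose, dotProduct_comm]

theorem flowMap_eq_on {n : ℕ} (A : Matrix (Fin n) (Fin n) ℝ) (b c p : Fin n → ℝ)
    (hc : A *ᵥ c = b - p) (hp : A *ᵥ p = 0) (x₀ : Fin n → ℝ) :
    ∀ t ∈ Icc (0:ℝ) 1,
      flowMap A b t x₀ = NormedSpace.exp (t • A) *ᵥ (x₀ + c) - c + t • p := by
  classical
  set φ₀ : ℝ → (Fin n → ℝ) → (Fin n → ℝ) :=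
    fun t x => NormedSpace.exp (t • A) *ᵥ (x + c) - c + t • p with hφ₀
  have hderiv : ∀ (x : Fin n → ℝ) (t : ℝ),
      HasDerivAt (fun s => φ₀ s x) (A *ᵥ (φ₀ t x) + b) t := by
    intro x t
    have h1 := hasDerivAt_mexp_mulVec A (x + c) t
    have h2 : HasDerivAt (fun s : ℝ => s • p) p t := by
      simpa using (hasDerivAt_id t).smul_const p
    have h3 := (h1.sub_const c).add h2
    have heq : A *ᵥ (φ₀ t x) + b
        = (A * NormedSpace.exp (t • A)) *ᵥ (x + c) + p := by
      simp only [hφ₀]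
      rw [Matrix.mulVec_add, Matrix.mulVec_sub, Matrix.mulVec_smul, hc, hp,
        Matrix.mulVec_mulVec]
      simp
      abel
    rw [heq]
    exact h3
  have hzero : ∀ x, φ₀ 0 x = x := by
    intro x
    simp [hφ₀, NormedSpace.exp_zero]
  have hex : ∃ φ : ℝ → (Fin n → ℝ) → (Fin n → ℝ),
      (∀ x₀, φ 0 x₀ = x₀) ∧ ∀ x₀ t, HasDerivAt (fun s => φ s x₀) (A *ᵥ (φ t x₀) + b) t :=
    ⟨φ₀, hzero, fun x t => hderiv x t⟩
  have hfm : flowMap A b = hex.choose := by rw [flowMap, dif_pos hex]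
  obtain ⟨hch0, hchd⟩ := hex.choose_spec
  obtain ⟨K, hK⟩ := lipschitz_affine A b
  have huniq : EqOn (fun t => hex.choose t x₀) (fun t => φ₀ t x₀) (Icc (0:ℝ) 1) := by
    apply ODE_solution_unique (v := fun _ x => A *ᵥ x + b) (fun _ => hK)
    · exact fun t _ => ((hchd x₀ t).continuousAt).continuousWithinAt
    · exact fun t _ => (hchd x₀ t).hasDerivWithinAt
    · exact fun t _ => ((hderiv x₀ t).continuousAt).continuousWithinAt
    · exact fun t _ => (hderiv x₀ t).hasDerivWithinAt
    · simp [hch0, hzero]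
  intro t ht
  rw [hfm]
  exact huniq ht

end Aux

/-- **Lemma 1.** Time integral of potential differences along the gradient flow. -/
theorem stmt2 {n : ℕ} (A : Matrix (Fin n) (Fin n) ℝ) (hA : A.IsSymm) (b : Fin n → ℝ)
    (M : Matrix (Fin n) (Fin n) ℝ)
    (hM : M = (2 : ℝ) • (A * mexp ((2 : ℝ) • A)) - mexp ((2 : ℝ) • A) + 1)
    (x₀ : Fin n → ℝ) :
    ∫ t in (0:ℝ)..1, (quadf A b (flowMap A b 1 x₀) - quadf A b (flowMap A b t x₀)) =
      (1 / 4) * ((x₀ + pinv A *ᵥ b) ⬝ᵥ (M *ᵥ (x₀ + pinv A *ᵥ b)))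
        + (1 / 2) * (b ⬝ᵥ (nullProj A *ᵥ b)) := by
  classical
  have hAt : Aᵀ = A := hA
  have hex := pinv_exists A hA
  have hpinv : pinv A = hex.choose := by rw [pinv, dif_pos hex]
  obtain ⟨hp1, hp2, hp3, hp4⟩ := hex.choose_spec
  rw [← hpinv] at hp1 hp2 hp3 hp4
  -- symmetry of the pseudoinverse
  have c1 : A * (pinv A)ᵀ * A = A := by
    have h := congrArg Matrix.transpose hp1
    rwa [Matrix.transpose_mul, Matrix.transpose_mul, hAt, ← mul_assoc] at h
  have c2 : (pinv A)ᵀ * A * (pinv A)ᵀ = (pinv A)ᵀ := by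
    have h := congrArg Matrix.transpose hp2
    rwa [Matrix.transpose_mul, Matrix.transpose_mul, hAt, ← mul_assoc] at h
  have e3 : A * (pinv A)ᵀ = pinv A * A := by
    calc A * (pinv A)ᵀ = (pinv A * Aᵀ)ᵀ := by
          rw [Matrix.transpose_mul, Matrix.transpose_transpose]
    _ = (pinv A * A)ᵀ := by rw [hAt]
    _ = pinv A * A := hp4
  have e4 : (pinv A)ᵀ * A = A * pinv A := by
    calc (pinv A)ᵀ * A = (Aᵀ * pinv A)ᵀ := by
          rw [Matrix.transpose_mul, Matrix.transpose_transpose]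
    _ = (A * pinv A)ᵀ := by rw [hAt]
    _ = A * pinv A := hp3
  have c3 : (A * (pinv A)ᵀ)ᵀ = A * (pinv A)ᵀ := by rw [e3, hp4]
  have c4 : ((pinv A)ᵀ * A)ᵀ = (pinv A)ᵀ * A := by rw [e4, hp3]
  have hsymB : (pinv A)ᵀ = pinv A :=
    pinv_uniq A (pinv A)ᵀ (pinv A) c1 c2 c3 c4 hp1 hp2 hp3 hp4
  have hcomm : A * pinv A = pinv A * A := by rw [← e3, hsymB]
  -- projection facts
  have hAAB : A * (A * pinv A) = A := by rw [hcomm, ← mul_assoc, hp1]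
  have hAP : A * nullProj A = 0 := by
    rw [nullProj, mul_sub, mul_one, hAAB, sub_self]
  have hPA : nullProj A * A = 0 := by
    rw [nullProj, sub_mul, one_mul, hp1, sub_self]
  have hPt : (nullProj A)ᵀ = nullProj A := by
    rw [nullProj, Matrix.transpose_sub, Matrix.transpose_one, hp3]
  have hQQ : (A * pinv A) * (A * pinv A) = A * pinv A := by
    rw [mul_assoc, ← mul_assoc (pinv A), hp2]
  have hPP : nullProj A * nullProj A = nullProj A := by
    rw [nullProj, sub_mul, mul_sub, mul_sub, hQQ]
    simp only [one_mul, mul_one]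
    abel
  have hBP : pinv A * nullProj A = 0 := by
    rw [nullProj, mul_sub, mul_one, ← mul_assoc, hp2, sub_self]
  -- vectors
  set c : Fin n → ℝ := pinv A *ᵥ b with hcdef
  set p : Fin n → ℝ := nullProj A *ᵥ b with hpdef
  set y : Fin n → ℝ := x₀ + c with hydef
  set q : ℝ := b ⬝ᵥ p with hqdef
  have hABone : A * pinv A = 1 - nullProj A := by rw [nullProj]; abel
  have hc : A *ᵥ c = b - p := by
    rw [hcdef, Matrix.mulVec_mulVec, hABone, Matrix.sub_mulVec, Matrix.one_mulVec, hpdef]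
  have hp : A *ᵥ p = 0 := by
    rw [hpdef, Matrix.mulVec_mulVec, hAP, Matrix.zero_mulVec]
  have key := flowMap_eq_on A b c p hc hp x₀
  set E : ℝ → Matrix (Fin n) (Fin n) ℝ := fun t => NormedSpace.exp (t • A) with hEdef
  have hEt : ∀ t, (E t)ᵀ = E t := fun t => mexp_transpose_symm hA t
  have hEP : ∀ t, E t * nullProj A = nullProj A := fun t => mexp_mul_eq_self A _ hAP t
  have hPE : ∀ t, nullProj A * E t = nullProj A := by
    intro t
    calc nullProj A * E t = ((E t)ᵀ * (nullProj A)ᵀ)ᵀ := by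
          rw [← Matrix.transpose_mul, Matrix.transpose_transpose]
    _ = nullProj A := by rw [hEt, hPt, hEP, hPt]
  -- value of the potential along the flow
  have quad_val : ∀ t : ℝ, quadf A b (E t *ᵥ y - c + t • p)
      = (1/2) * (y ⬝ᵥ ((A * E (2*t)) *ᵥ y)) + (y ⬝ᵥ p) - (1/2) * (c ⬝ᵥ b) + t * q := by
    intro t
    set u : Fin n → ℝ := E t *ᵥ y with hudef
    have hAx : A *ᵥ (u - c + t • p) = (A * E t) *ᵥ y - b + p := by
      rw [Matrix.mulVec_add, Matrix.mulVec_sub, Matrix.mulVec_smul, hc, hp, smul_zero,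
        add_zero, hudef, Matrix.mulVec_mulVec]
      abel
    have hEAE : E t * (A * E t) = A * E (2*t) := by
      rw [hEdef, ← mul_assoc]
      rw [mexp_comm, mul_assoc, mexp_mul_mexp]
    have h1 : u ⬝ᵥ ((A * E t) *ᵥ y) = y ⬝ᵥ ((A * E (2*t)) *ᵥ y) := by
      rw [hudef, dotProduct_mulVec_left, hEt, Matrix.mulVec_mulVec, hEAE]
    have h3 : u ⬝ᵥ p = y ⬝ᵥ p := by
      rw [hudef, dotProduct_mulVec_left, hEt, hpdef, Matrix.mulVec_mulVec, hEP]
    have hbPy : b ⬝ᵥ (nullProj A *ᵥ y) = y ⬝ᵥ p := by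
      rw [dotProduct_comm, dotProduct_mulVec_left, hPt, hpdef]
    have h4 : c ⬝ᵥ ((A * E t) *ᵥ y) = b ⬝ᵥ u - y ⬝ᵥ p := by
      rw [hcdef, dotProduct_mulVec_left, hsymB, Matrix.mulVec_mulVec, ← mul_assoc,
        ← hcomm, hABone, sub_mul, one_mul, hPE, Matrix.sub_mulVec,
        dotProduct_sub, hbPy, hudef]
    have h5 : c ⬝ᵥ p = 0 := by
      rw [hcdef, hpdef, dotProduct_mulVec_left, hsymB, Matrix.mulVec_mulVec, hBP,
        Matrix.zero_mulVec, dotProduct_zero]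
    have h6 : p ⬝ᵥ ((A * E t) *ᵥ y) = 0 := by
      rw [hpdef, dotProduct_mulVec_left, hPt, Matrix.mulVec_mulVec, ← mul_assoc, hPA,
        Matrix.zero_mul, Matrix.zero_mulVec, dotProduct_zero]
    have h7 : p ⬝ᵥ p = q := by
      conv_lhs => rw [hpdef, dotProduct_mulVec_left, hPt, Matrix.mulVec_mulVec, hPP]
    have h8 : p ⬝ᵥ b = q := by rw [hqdef, dotProduct_comm]
    have h2 : u ⬝ᵥ b = b ⬝ᵥ u := dotProduct_comm _ _
    have h9 : b ⬝ᵥ c = c ⬝ᵥ b := dotProduct_comm _ _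
    have h10 : b ⬝ᵥ p = q := hqdef.symm
    rw [quadf, hAx]
    simp only [dotProduct_add, dotProduct_sub, sub_dotProduct,
      add_dotProduct, smul_dotProduct, dotProduct_smul, smul_eq_mul]
    rw [h1, h2, h3, h4, h5, h6, h7, h8, h9, h10]
    ring
  -- the integrand
  set C1 : ℝ := y ⬝ᵥ ((A * E 2) *ᵥ y) with hC1def
  set J : ℝ → ℝ := fun t =>
    (1/2) * C1 - (1/2) * (y ⬝ᵥ ((A * E (2*t)) *ᵥ y)) + (1-t) * q with hJdef
  have hflow1 : flowMap A b 1 x₀ = E 1 *ᵥ y - c + (1:ℝ) • p := by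
    rw [hydef]
    exact key 1 (by constructor <;> norm_num)
  have hinteq : Set.EqOn
      (fun t => quadf A b (flowMap A b 1 x₀) - quadf A b (flowMap A b t x₀)) J
      (Set.uIcc (0:ℝ) 1) := by
    intro t ht
    rw [Set.uIcc_of_le zero_le_one] at ht
    have hft : flowMap A b t x₀ = E t *ᵥ y - c + t • p := by
      simpa [hydef] using key t ht
    simp only [hflow1, hft, quad_val, hJdef]
    have h21 : (2:ℝ) * 1 = 2 := by norm_num
    rw [h21]
    ring
  rw [intervalIntegral.integral_congr hinteq]
  -- FTC
  have hS : ∀ t : ℝ, HasDerivAt (fun s : ℝ => y ⬝ᵥ (E (2*s) *ᵥ y))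
      (2 * (y ⬝ᵥ ((A * E (2*t)) *ᵥ y))) t := by
    intro t
    have hbase := hasDerivAt_dot_mexp A y y (2*t)
    have hin : HasDerivAt (fun s : ℝ => 2*s) 2 t := by
      simpa using (hasDerivAt_id t).const_mul (2:ℝ)
    have h'' : 2 * (y ⬝ᵥ ((A * E (2*t)) *ᵥ y)) = y ⬝ᵥ ((A * E (2*t)) *ᵥ y) * 2 :=
      mul_comm _ _
    rw [h'']
    exact HasDerivAt.comp t hbase hin
  set g : ℝ → ℝ := fun t =>
    (1/2) * C1 * t - (1/4) * (y ⬝ᵥ (E (2*t) *ᵥ y)) + q * t - q/2 * t^2 with hgdef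
  have hg : ∀ t : ℝ, HasDerivAt g (J t) t := by
    intro t
    have hlin : HasDerivAt (fun s : ℝ => (1/2) * C1 * s) ((1/2) * C1) t := by
      simpa [mul_assoc, mul_comm] using (hasDerivAt_id t).const_mul ((1/2) * C1)
    have hq1 : HasDerivAt (fun s : ℝ => q * s) q t := by
      simpa using (hasDerivAt_id t).const_mul q
    have hsq : HasDerivAt (fun s : ℝ => q/2 * s^2) (q/2 * (2*t)) t := by
      have := (hasDerivAt_pow 2 t).const_mul (q/2)
      simpa [mul_comm, mul_assoc] using this
    have hcomb := ((hlin.sub ((hS t).const_mul (1/4))).add hq1).sub hsq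
    refine HasDerivAt.congr_deriv hcomb ?_
    rw [hJdef]
    ring
  have hJcont : Continuous J := by
    rw [hJdef]
    have := continuous_dot_mexp A y y
    fun_prop
  rw [intervalIntegral.integral_eq_sub_of_hasDerivAt (fun t _ => hg t)
    (hJcont.intervalIntegrable 0 1)]
  -- final algebra
  have hE0 : E (2*0) = 1 := by
    rw [hEdef]
    norm_num
  have h21 : (2:ℝ) * 1 = 2 := by norm_num
  have hmexp : mexp ((2:ℝ) • A) = E 2 := rfl
  clear_value c p y q E
  rw [hgdef, hC1def, hM, hmexp]
  simp only [hE0, h21, Matrix.add_mulVec, Matrix.sub_mulVec, Matrix.smul_mulVec,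
    Matrix.one_mulVec, dotProduct_add, dotProduct_sub, dotProduct_smul,
    smul_eq_mul]
  ring
end

section
/- Let Σ₀, Σ₁ be symmetric positive definite, μ₀, μ₁ ∈ ℝⁿ, A = log(Σ₀^{-1/2}(Σ₀^{1/2} Σ₁ Σ₀^{1/2})^{1/2} Σ₀^{-1/2}), and b = ((e^{A} − I) A⁺ + P_A)^{-1}(μ₁ − e^{A} μ₀). Then bᵀ P_A b = ‖P_A (μ₁ − μ₀)‖². -/
open Matrix MeasureTheory ProbabilityTheory
open scoped Classical

section Stmt13Aux

open Matrix

variable {n : ℕ}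

lemma pinv_spec' (A : Matrix (Fin n) (Fin n) ℝ)
    (h : ∃ B : Matrix (Fin n) (Fin n) ℝ,
      A * B * A = A ∧ B * A * B = B ∧ (A * B)ᵀ = A * B ∧ (B * A)ᵀ = B * A) :
    A * pinv A * A = A ∧ pinv A * A * pinv A = pinv A ∧
      (A * pinv A)ᵀ = A * pinv A ∧ (pinv A * A)ᵀ = pinv A * A := by
  rw [pinv, dif_pos h]
  exact h.choose_spec

lemma pinv_unique' (A B : Matrix (Fin n) (Fin n) ℝ)
    (hB : A * B * A = A ∧ B * A * B = B ∧ (A * B)ᵀ = A * B ∧ (B * A)ᵀ = B * A) :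
    pinv A = B := by
  obtain ⟨hC1, hC2, hC3, hC4⟩ := pinv_spec' A ⟨B, hB⟩
  obtain ⟨hB1, hB2, hB3, hB4⟩ := hB
  set C := pinv A with hC
  have hAB : A * B = A * C := by
    calc A * B = (A * C * A) * B := by rw [hC1]
    _ = (A * C) * (A * B) := by noncomm_ring
    _ = (A * C)ᵀ * (A * B)ᵀ := by rw [hC3, hB3]
    _ = Cᵀ * (A * B * A)ᵀ := by
        simp only [Matrix.transpose_mul]; noncomm_ring
    _ = Cᵀ * Aᵀ := by rw [hB1]
    _ = (A * C)ᵀ := by rw [Matrix.transpose_mul]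
    _ = A * C := hC3
  have hBA : B * A = C * A := by
    calc B * A = B * (A * C * A) := by rw [hC1]
    _ = (B * A) * (C * A) := by noncomm_ring
    _ = (B * A)ᵀ * (C * A)ᵀ := by rw [hC4, hB4]
    _ = (A * B * A)ᵀ * Cᵀ := by
        simp only [Matrix.transpose_mul]; noncomm_ring
    _ = Aᵀ * Cᵀ := by rw [hB1]
    _ = (C * A)ᵀ := by rw [Matrix.transpose_mul]
    _ = C * A := hC4
  calc C = C * A * C := hC2.symm
  _ = (C * A) * C := by noncomm_ring
  _ = (B * A) * C := by rw [hBA]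
  _ = B * (A * C) := by noncomm_ring
  _ = B * (A * B) := by rw [hAB]
  _ = B * A * B := by noncomm_ring
  _ = B := hB2

lemma stmt13_key (A : Matrix (Fin n) (Fin n) ℝ) (hs : A.IsSymm) (μ₀ μ₁ b : Fin n → ℝ)
    (hb : b = ((mexp A - 1) * pinv A + nullProj A)⁻¹ *ᵥ (μ₁ - mexp A *ᵥ μ₀)) :
    b ⬝ᵥ (nullProj A *ᵥ b) = sqNorm (nullProj A *ᵥ (μ₁ - μ₀)) := by
  have hH : A.IsHermitian := by
    rwa [Matrix.IsHermitian, Matrix.conjTranspose_eq_transpose_of_trivial]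
  set U : Matrix (Fin n) (Fin n) ℝ := (hH.eigenvectorUnitary : Matrix (Fin n) (Fin n) ℝ)
    with hUdef
  have hU1 : star U * U = 1 := (Matrix.mem_unitaryGroup_iff').mp hH.eigenvectorUnitary.2
  have hU2 : U * star U = 1 := (Matrix.mem_unitaryGroup_iff).mp hH.eigenvectorUnitary.2
  have hstar : star U = Uᵀ := by
    rw [Matrix.star_eq_conjTranspose, Matrix.conjTranspose_eq_transpose_of_trivial]
  set φ : (Fin n → ℝ) → Matrix (Fin n) (Fin n) ℝ := fun v => U * diagonal v * star U
    with hφdef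
  have hφmul : ∀ v w : Fin n → ℝ, φ v * φ w = φ (fun i => v i * w i) := by
    intro v w
    show U * diagonal v * star U * (U * diagonal w * star U) = _
    calc U * diagonal v * star U * (U * diagonal w * star U)
        = U * diagonal v * (star U * U) * (diagonal w * star U) := by noncomm_ring
    _ = U * (diagonal v * diagonal w) * star U := by rw [hU1]; noncomm_ring
    _ = U * diagonal (fun i => v i * w i) * star U := by
        rw [Matrix.diagonal_mul_diagonal]
  have hφT : ∀ v : Fin n → ℝ, (φ v)ᵀ = φ v := by
    intro v
    show (U * diagonal v * star U)ᵀ = U * diagonal v * star U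
    rw [hstar]
    simp [Matrix.transpose_mul, Matrix.diagonal_transpose, Matrix.mul_assoc]
  have hφ1 : φ (fun _ => (1:ℝ)) = 1 := by
    show U * diagonal (fun _ => (1:ℝ)) * star U = 1
    rw [show Matrix.diagonal (fun _ => (1:ℝ)) = (1 : Matrix (Fin n) (Fin n) ℝ) from
      Matrix.diagonal_one, Matrix.mul_one, hU2]
  have hφsub : ∀ v w : Fin n → ℝ, φ v - φ w = φ (v - w) := by
    intro v w
    show U * diagonal v * star U - U * diagonal w * star U = U * diagonal (v - w) * star U
    have hdsub : diagonal (v - w) = diagonal v - diagonal w := (Matrix.diagonal_sub v w).symm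
    rw [hdsub]; noncomm_ring
  have hφadd : ∀ v w : Fin n → ℝ, φ v + φ w = φ (v + w) := by
    intro v w
    show U * diagonal v * star U + U * diagonal w * star U = U * diagonal (v + w) * star U
    have hdadd : diagonal (v + w) = diagonal v + diagonal w := (Matrix.diagonal_add v w).symm
    rw [hdadd]; noncomm_ring
  set d : Fin n → ℝ := fun i => hH.eigenvalues i with hd
  have hAφ : A = φ d := by
    have := hH.spectral_theorem
    simpa [hφdef, hUdef, hd, Function.comp] using this
  -- pseudoinverse
  set dp : Fin n → ℝ := fun i => if d i = 0 then 0 else (d i)⁻¹ with hdp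
  have hpinv : pinv A = φ dp := by
    apply pinv_unique'
    rw [hAφ]
    refine ⟨?_, ?_, ?_, ?_⟩
    · rw [hφmul, hφmul]
      refine congrArg φ (funext fun i => ?_)
      by_cases h : d i = 0
      · simp [hdp, h]
      · simp only [hdp, if_neg h]
        field_simp
    · rw [hφmul, hφmul]
      refine congrArg φ (funext fun i => ?_)
      by_cases h : d i = 0
      · simp [hdp, h]
      · simp only [hdp, if_neg h]
        field_simp
    · rw [hφmul, hφT]
    · rw [hφmul, hφT]
  -- exponential
  have hexp : mexp A = φ (fun i => Real.exp (d i)) := by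
    have hUu : IsUnit U := (Matrix.isUnit_iff_isUnit_det U).mpr (Matrix.isUnit_det_of_left_inverse hU1)
    have hUinv : U⁻¹ = star U := Matrix.inv_eq_left_inv hU1
    rw [mexp, hAφ]
    show NormedSpace.exp (U * diagonal d * star U) = _
    rw [← hUinv, Matrix.exp_conj U (diagonal d) hUu, Matrix.exp_diagonal, hUinv]
    have : NormedSpace.exp d = fun i => Real.exp (d i) := by
      funext i
      rw [Pi.coe_exp]
      exact (congr_fun Real.exp_eq_exp_ℝ (d i)).symm
    rw [this]
  -- projection onto null space
  set π : Fin n → ℝ := fun i => if d i = 0 then 1 else 0 with hπ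
  have hP : nullProj A = φ π := by
    rw [nullProj, hpinv, hAφ, hφmul, ← hφ1, hφsub]
    refine congrArg φ (funext fun i => ?_)
    by_cases h : d i = 0 <;> simp [hdp, hπ, h]
  -- the matrix M and its inverse
  set m : Fin n → ℝ := fun i => if d i = 0 then 1 else (Real.exp (d i) - 1) * (d i)⁻¹
    with hm
  have hmne : ∀ i, m i ≠ 0 := by
    intro i
    by_cases h : d i = 0
    · simp [hm, h]
    · have h1 : Real.exp (d i) - 1 ≠ 0 := by
        refine sub_ne_zero.mpr ?_
        rw [ne_eq, Real.exp_eq_one_iff]; exact h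
      simp only [hm, if_neg h]
      exact mul_ne_zero h1 (inv_ne_zero h)
  have hM : (mexp A - 1) * pinv A + nullProj A = φ m := by
    rw [hexp, hpinv, hP, ← hφ1, hφsub, hφmul, hφadd]
    refine congrArg φ (funext fun i => ?_)
    by_cases h : d i = 0 <;> simp [hdp, hπ, hm, h]
  have hMinv : ((mexp A - 1) * pinv A + nullProj A)⁻¹ = φ (fun i => (m i)⁻¹) := by
    rw [hM]
    apply Matrix.inv_eq_left_inv
    rw [hφmul, ← hφ1]
    exact congrArg φ (funext fun i => inv_mul_cancel₀ (hmne i))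
  -- key projection identities
  have hPM : nullProj A * ((mexp A - 1) * pinv A + nullProj A)⁻¹ = nullProj A := by
    rw [hMinv, hP, hφmul]
    refine congrArg φ (funext fun i => ?_)
    by_cases h : d i = 0 <;> simp [hπ, hm, h]
  have hPE : nullProj A * mexp A = nullProj A := by
    rw [hP, hexp, hφmul]
    refine congrArg φ (funext fun i => ?_)
    by_cases h : d i = 0 <;> simp [hπ, h]
  have hPP : nullProj A * nullProj A = nullProj A := by
    rw [hP, hφmul]
    refine congrArg φ (funext fun i => ?_)
    by_cases h : d i = 0 <;> simp [hπ, h]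
  have hPT : (nullProj A)ᵀ = nullProj A := by rw [hP, hφT]
  -- compute P b
  have hPb : nullProj A *ᵥ b = nullProj A *ᵥ (μ₁ - μ₀) := by
    rw [hb, Matrix.mulVec_mulVec, hPM, Matrix.mulVec_sub, Matrix.mulVec_sub,
      Matrix.mulVec_mulVec, hPE]
  -- finish
  calc b ⬝ᵥ (nullProj A *ᵥ b)
      = b ⬝ᵥ ((nullProj A * nullProj A) *ᵥ b) := by rw [hPP]
    _ = b ⬝ᵥ (nullProj A *ᵥ (nullProj A *ᵥ b)) := by rw [Matrix.mulVec_mulVec]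
    _ = (b ᵥ* nullProj A) ⬝ᵥ (nullProj A *ᵥ b) := by rw [Matrix.dotProduct_mulVec]
    _ = (nullProj A *ᵥ b) ⬝ᵥ (nullProj A *ᵥ b) := by
        rw [← Matrix.mulVec_transpose, hPT]
    _ = sqNorm (nullProj A *ᵥ (μ₁ - μ₀)) := by
        rw [hPb, sqNorm]
        simp [dotProduct, sq]

end Stmt13Aux

/-- The null-space term: `bᵀ P_A b = ‖P_A (μ₁ − μ₀)‖²`. -/
theorem stmt13 {n : ℕ} (μ₀ μ₁ : Fin n → ℝ) (S₀ S₁ : Matrix (Fin n) (Fin n) ℝ)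
    (h₀ : S₀.PosDef) (h₁ : S₁.PosDef) (A : Matrix (Fin n) (Fin n) ℝ)
    (hA : A = matLog ((msqrt S₀)⁻¹ * msqrt (msqrt S₀ * S₁ * msqrt S₀) * (msqrt S₀)⁻¹))
    (b : Fin n → ℝ)
    (hb : b = ((mexp A - 1) * pinv A + nullProj A)⁻¹ *ᵥ (μ₁ - mexp A *ᵥ μ₀)) :
    b ⬝ᵥ (nullProj A *ᵥ b) = sqNorm (nullProj A *ᵥ (μ₁ - μ₀)) := by
  have hs : A.IsSymm := by
    rw [hA, matLog]
    split_ifs with h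
    · exact h.choose_spec.1
    · exact Matrix.isSymm_zero
  exact stmt13_key A hs μ₀ μ₁ b hb
end
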